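/- The term-rewriting system of the previous statement is locally confluent: if a word t rewrites in one step to both t′ and t″, then there is a word t‴ reachable from t′ and from t″ by chains of rewrites of length at most 2. -/

import Mathlib

open CategoryTheory

/-- The data from which the category `O` of opetopes is presented: for each `k` the
category `O_k` of `k`-opetopes; for each `(k+1)`-opetope `α` a set `G k x α` of generating
face maps from each of its `(k-1)`-dimensional faces `x`; for each face map `γ : x → α`
and morphism `g : α ⟶ β` of `O_{k+1}` the unique restriction of `g` to the specified face
(a `(k)`-morphism `x ⟶ y` together with the corresponding face map `y → β`); and the
identifications of faces where composition occurs, recorded as a relation `Ident` on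
composable pairs of face maps mediated by an object-morphism `f : x ⟶ y`. -/
structure OpData where
  Obj : ℕ → Type
  [cat : ∀ k, SmallCategory (Obj k)]
  G : ∀ k, Obj k → Obj (k + 1) → Type
  restr : ∀ {k : ℕ} {x : Obj k} {α β : Obj (k + 1)},
    G k x α → (α ⟶ β) → Σ y : Obj k, (x ⟶ y) × G k y β
  Ident : ∀ {k : ℕ} {x y : Obj k} {α β : Obj (k + 1)} {θ : Obj (k + 2)},
    G k x α → G (k + 1) α θ → G k y β → G (k + 1) β θ → (x ⟶ y) → Prop

attribute [instance] OpData.cat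

/-- Objects of the category of opetopes: opetopes of all dimensions. -/
def OpData.TotalObj (D : OpData) : Type := Σ k, D.Obj k

/-- Generating morphisms of the category of opetopes: the morphisms of each `O_k`, and the
generating face maps. -/
inductive OpData.Gen (D : OpData) : D.TotalObj → D.TotalObj → Type
  | ofHom {k : ℕ} {a b : D.Obj k} : (a ⟶ b) → D.Gen ⟨k, a⟩ ⟨k, b⟩
  | face {k : ℕ} {x : D.Obj k} {α : D.Obj (k + 1)} : D.G k x α → D.Gen ⟨k, x⟩ ⟨k + 1, α⟩

instance OpData.quiverTotal (D : OpData) : Quiver D.TotalObj := ⟨D.Gen⟩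


/-- The basic rewriting rules, obtained by orienting the equations of the presentation of
`O` from left to right:  `γ` then `g` rewrites to `γg` then `γ'` (restriction); a
composable pair of morphisms of `O_k` rewrites to its composite; an identity followed by a
face map `γ` rewrites to `γ`. -/
inductive OpData.ORel (D : OpData) :
    ∀ {a b : Paths D.TotalObj}, (a ⟶ b) → (a ⟶ b) → Prop
  | r1 {k : ℕ} {x : D.Obj k} {α β : D.Obj (k + 1)} (γ : D.G k x α) (g : α ⟶ β) :
      OpData.ORel D
        ((Quiver.Hom.toPath (OpData.Gen.face γ)).comp
          (Quiver.Hom.toPath (OpData.Gen.ofHom g)))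
        ((Quiver.Hom.toPath (OpData.Gen.ofHom (D.restr γ g).2.1)).comp
          (Quiver.Hom.toPath (OpData.Gen.face (D.restr γ g).2.2)))
  | r2 {k : ℕ} {a b c : D.Obj k} (f : a ⟶ b) (g : b ⟶ c) :
      OpData.ORel D
        ((Quiver.Hom.toPath (OpData.Gen.ofHom f)).comp
          (Quiver.Hom.toPath (OpData.Gen.ofHom g)))
        (Quiver.Hom.toPath (OpData.Gen.ofHom (f ≫ g)))
  | r3 {k : ℕ} {x : D.Obj k} {α : D.Obj (k + 1)} (γ : D.G k x α) :
      OpData.ORel D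
        ((Quiver.Hom.toPath (OpData.Gen.ofHom (𝟙 x))).comp
          (Quiver.Hom.toPath (OpData.Gen.face γ)))
        (Quiver.Hom.toPath (OpData.Gen.face γ))

/-- One rewriting step: a basic rule applied anywhere inside a word of generators. -/
inductive OpData.Step (D : OpData) :
    ∀ {a b : Paths D.TotalObj}, (a ⟶ b) → (a ⟶ b) → Prop
  | mk {a b c d : Paths D.TotalObj} (p : a ⟶ b) {u v : b ⟶ c} (q : c ⟶ d)
      (h : D.ORel u v) : OpData.Step D (p ≫ u ≫ q) (p ≫ v ≫ q)

/-- The weight of a generator relative to dimension `j`: `1` for a morphism of `O_j`,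
`0` otherwise. -/
def OpData.genWt (D : OpData) (j : ℕ) : ∀ {a b : D.TotalObj}, D.Gen a b → ℕ
  | _, _, @OpData.Gen.ofHom _ k' _ _ _ => if k' = j then 1 else 0
  | _, _, @OpData.Gen.face _ _ _ _ _ => 0
/-- A chain of at most two rewriting steps. -/
def OpData.ChainLe2 (D : OpData) {a b : Paths D.TotalObj} (u v : a ⟶ b) : Prop :=
  u = v ∨ D.Step u v ∨ ∃ w, D.Step u w ∧ D.Step w v


section AuxiliaryLemmas

open Quiver

private lemma path_suffix' {V : Type*} [Quiver V] {a : V} :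
    ∀ {c b : V} (q : Path c b) {c' : V} (s : Path a c) (s' : Path a c') (q' : Path c' b),
      s.comp q = s'.comp q' →
      (∃ m : Path c' c, s = s'.comp m ∧ q' = m.comp q) ∨
      (∃ m : Path c c', s' = s.comp m ∧ q = m.comp q') := by
  intro c b q
  induction q with
  | nil =>
    intro c' s s' q' h
    left; exact ⟨q', by simpa using h, by simp⟩
  | cons q₁ e ih =>
    intro c' s s' q' h
    cases q' with
    | nil =>
      right; exact ⟨q₁.cons e, by simpa using h.symm, by simp⟩
    | cons q₁' e' =>
      injection h with h0 h1 h2 h3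
      subst h0
      rw [heq_iff_eq] at h2 h3
      subst h3
      rcases ih s s' q₁' h2 with ⟨m, hm1, hm2⟩ | ⟨m, hm1, hm2⟩
      · left; exact ⟨m, hm1, by rw [hm2]; rfl⟩
      · right; exact ⟨m, hm1, by rw [hm2]; rfl⟩

private lemma path_len1' {V : Type*} [Quiver V] {a b : V} (m : Path a b) (h : m.length = 1) :
    ∃ e : a ⟶ b, m = e.toPath := by
  cases m with
  | nil => simp at h
  | cons m₁ e =>
    have h0 : m₁.length = 0 := by simpa using h
    have := m₁.eq_of_length_zero h0
    subst this
    cases m₁ with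
    | nil => exact ⟨e, rfl⟩
    | cons m₂ f => simp at h0

private lemma path_nil0' {V : Type*} [Quiver V] {a : V} (m : Path a a) (h : m.length = 0) :
    m = Path.nil := by
  cases m with
  | nil => rfl
  | cons m₂ f => simp at h

end AuxiliaryLemmas

namespace OpData

open CategoryTheory

variable {D : OpData}

/-- `toPath` for generators, with the intended quiver instance. -/
abbrev tp {a b : D.TotalObj} (e : D.Gen a b) : @Quiver.Path D.TotalObj D.quiverTotal a b :=
  Quiver.Hom.toPath e

@[simp] lemma pathComp_eq {a b c : D.TotalObj}
    (p : @Quiver.Path D.TotalObj D.quiverTotal a b)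
    (q : @Quiver.Path D.TotalObj D.quiverTotal b c) :
    p.comp q = @CategoryStruct.comp (Paths D.TotalObj) _ a b c p q := rfl

@[simp] lemma pathComp_eq_P {a b c : Paths D.TotalObj} (p : a ⟶ b) (q : b ⟶ c) :
    @Quiver.Path.comp D.TotalObj D.quiverTotal a b c p q = p ≫ q := rfl

@[simp] lemma pathComp_eq_mk {k₁ k₂ k₃ : ℕ} {x₁ : D.Obj k₁} {x₂ : D.Obj k₂} {x₃ : D.Obj k₃}
    (p : @Quiver.Path D.TotalObj D.quiverTotal (Sigma.mk k₁ x₁) (Sigma.mk k₂ x₂))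
    (q : @Quiver.Path D.TotalObj D.quiverTotal (Sigma.mk k₂ x₂) (Sigma.mk k₃ x₃)) :
    p.comp q = @CategoryStruct.comp (Paths D.TotalObj) _ (Sigma.mk k₁ x₁ : D.TotalObj)
      (Sigma.mk k₂ x₂ : D.TotalObj) (Sigma.mk k₃ x₃ : D.TotalObj) p q := rfl

@[simp] lemma pathNil_eq_P {a : Paths D.TotalObj} :
    @Quiver.Path.nil D.TotalObj D.quiverTotal a = 𝟙 a := rfl

@[simp] lemma assoc_mk {k₁ k₂ k₃ k₄ : ℕ} {x₁ : D.Obj k₁} {x₂ : D.Obj k₂} {x₃ : D.Obj k₃}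
    {x₄ : D.Obj k₄}
    (f : @Quiver.Hom (Paths D.TotalObj) _ (Sigma.mk k₁ x₁ : D.TotalObj) (Sigma.mk k₂ x₂ : D.TotalObj))
    (g : @Quiver.Hom (Paths D.TotalObj) _ (Sigma.mk k₂ x₂ : D.TotalObj) (Sigma.mk k₃ x₃ : D.TotalObj))
    (h : @Quiver.Hom (Paths D.TotalObj) _ (Sigma.mk k₃ x₃ : D.TotalObj) (Sigma.mk k₄ x₄ : D.TotalObj)) :
    (f ≫ g) ≫ h = f ≫ g ≫ h := Category.assoc f g h

@[simp] lemma id_comp_mk {k₁ k₂ : ℕ} {x₁ : D.Obj k₁} {x₂ : D.Obj k₂}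
    (f : @Quiver.Hom (Paths D.TotalObj) _ (Sigma.mk k₁ x₁ : D.TotalObj) (Sigma.mk k₂ x₂ : D.TotalObj)) :
    @CategoryStruct.id (Paths D.TotalObj) _ (Sigma.mk k₁ x₁ : D.TotalObj) ≫ f = f :=
  Category.id_comp f

@[simp] lemma comp_id_mk {k₁ k₂ : ℕ} {x₁ : D.Obj k₁} {x₂ : D.Obj k₂}
    (f : @Quiver.Hom (Paths D.TotalObj) _ (Sigma.mk k₁ x₁ : D.TotalObj) (Sigma.mk k₂ x₂ : D.TotalObj)) :
    f ≫ @CategoryStruct.id (Paths D.TotalObj) _ (Sigma.mk k₂ x₂ : D.TotalObj) = f :=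
  Category.comp_id f

@[simp] lemma pathNil_eq {a : D.TotalObj} :
    (Quiver.Path.nil : @Quiver.Path D.TotalObj D.quiverTotal a a) =
      @CategoryStruct.id (Paths D.TotalObj) _ a := rfl

lemma step_of_orel {a b : Paths D.TotalObj} {u v : a ⟶ b} (h : D.ORel u v) : D.Step u v := by
  simpa using OpData.Step.mk (𝟙 a) (𝟙 b) h

lemma step_congr {a b c d : Paths D.TotalObj} (p : a ⟶ b) {u v : b ⟶ c} (q : c ⟶ d)
    (h : D.Step u v) : D.Step (p ≫ u ≫ q) (p ≫ v ≫ q) := by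
  obtain ⟨p', q', h'⟩ := h
  simpa using OpData.Step.mk (p ≫ p') (q' ≫ q) h'

lemma chain_congr {a b c d : Paths D.TotalObj} (p : a ⟶ b) {u v : b ⟶ c} (q : c ⟶ d)
    (h : D.ChainLe2 u v) : D.ChainLe2 (p ≫ u ≫ q) (p ≫ v ≫ q) := by
  rcases h with rfl | h | ⟨w, hw1, hw2⟩
  · exact Or.inl rfl
  · exact Or.inr (Or.inl (step_congr p q h))
  · exact Or.inr (Or.inr ⟨p ≫ w ≫ q, step_congr p q hw1, step_congr p q hw2⟩)

lemma orel_length {a b : Paths D.TotalObj} {u v : a ⟶ b} (h : D.ORel u v) :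
    @Quiver.Path.length D.TotalObj D.quiverTotal a b u = 2 := by
  cases h <;> rfl

lemma orel_det {a b : Paths D.TotalObj} {u v v' : a ⟶ b} (h : D.ORel u v)
    (h' : D.ORel u v') : v = v' := by
  cases h <;> cases h' <;> rfl

/-- Resolution of the critical pairs. -/
lemma crit
    (hid : ∀ {k : ℕ} {x : D.Obj k} {α : D.Obj (k + 1)} (γ : D.G k x α),
      D.restr γ (𝟙 α) = ⟨x, 𝟙 x, γ⟩)
    (hcomp : ∀ {k : ℕ} {x : D.Obj k} {α β δ : D.Obj (k + 1)}
      (γ : D.G k x α) (g : α ⟶ β) (g' : β ⟶ δ),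
      D.restr γ (g ≫ g') =
        ⟨(D.restr (D.restr γ g).2.2 g').1,
         (D.restr γ g).2.1 ≫ (D.restr (D.restr γ g).2.2 g').2.1,
         (D.restr (D.restr γ g).2.2 g').2.2⟩)
    {a b c d : Paths D.TotalObj} (e₁ : D.Gen a b) (e₂ : D.Gen b c) (e₃ : D.Gen c d)
    {vL : a ⟶ c} {vR : b ⟶ d}
    (hL : D.ORel (tp e₁ ≫ tp e₂) vL) (hR : D.ORel (tp e₂ ≫ tp e₃) vR) :
    ∃ w : a ⟶ d, D.ChainLe2 (vL ≫ tp e₃) w ∧ D.ChainLe2 (tp e₁ ≫ vR) w := by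
  cases hL with
  | r1 γ g =>
    cases hR with
    | r2 f' g' =>
      refine ⟨_, Or.inr (Or.inr ⟨tp (Gen.ofHom (D.restr γ g).2.1) ≫
          tp (Gen.ofHom (D.restr (D.restr γ g).2.2 g').2.1) ≫
          tp (Gen.face (D.restr (D.restr γ g).2.2 g').2.2), ?_, ?_⟩),
        Or.inr (Or.inl (step_of_orel (OpData.ORel.r1 (D := D) γ (g ≫ g'))))⟩
      · simpa using
          (OpData.Step.mk (tp (Gen.ofHom (D.restr γ g).2.1)) (𝟙 _)
            (OpData.ORel.r1 (D := D) (D.restr γ g).2.2 g'))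
      · have := OpData.Step.mk (D := D) (𝟙 _)
            (tp (Gen.face (D.restr (D.restr γ g).2.2 g').2.2))
            (OpData.ORel.r2 (D := D) (D.restr γ g).2.1 (D.restr (D.restr γ g).2.2 g').2.1)
        rw [hcomp γ g g']
        simpa using this
    | r3 γ' =>
      refine ⟨tp (Gen.face γ) ≫ tp (Gen.face γ'), Or.inr (Or.inl ?_), Or.inl rfl⟩
      have := OpData.Step.mk (D := D) (𝟙 _) (tp (Gen.face γ')) (OpData.ORel.r3 (D := D) γ)
      rw [hid γ]
      simpa using this
  | r2 f g =>
    cases hR with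
    | r2 f' g' =>
      refine ⟨tp (Gen.ofHom (f ≫ g ≫ g')), Or.inr (Or.inl ?_), Or.inr (Or.inl ?_)⟩
      · simpa [Category.assoc] using step_of_orel (OpData.ORel.r2 (D := D) (f ≫ g) g')
      · exact step_of_orel (OpData.ORel.r2 (D := D) f (g ≫ g'))
    | r3 γ' =>
      refine ⟨tp (Gen.ofHom f) ≫ tp (Gen.face γ'), Or.inl ?_, Or.inl rfl⟩
      simp
  | r3 γ =>
    cases hR with
    | r1 γ' g' =>
      refine ⟨_, Or.inr (Or.inl (step_of_orel (OpData.ORel.r1 (D := D) γ g'))), Or.inr (Or.inl ?_)⟩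
      have := OpData.Step.mk (D := D) (𝟙 _) (tp (Gen.face (D.restr γ g').2.2))
          (OpData.ORel.r2 (D := D) (𝟙 _) (D.restr γ g').2.1)
      simpa using this

/-- Main case analysis, after fixing the relative position of the two redexes. -/
lemma auxConf
    (hid : ∀ {k : ℕ} {x : D.Obj k} {α : D.Obj (k + 1)} (γ : D.G k x α),
      D.restr γ (𝟙 α) = ⟨x, 𝟙 x, γ⟩)
    (hcomp : ∀ {k : ℕ} {x : D.Obj k} {α β δ : D.Obj (k + 1)}
      (γ : D.G k x α) (g : α ⟶ β) (g' : β ⟶ δ),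
      D.restr γ (g ≫ g') =
        ⟨(D.restr (D.restr γ g).2.2 g').1,
         (D.restr γ g).2.1 ≫ (D.restr (D.restr γ g).2.2 g').2.1,
         (D.restr (D.restr γ g).2.2 g').2.2⟩)
    {a b c d c' d' : Paths D.TotalObj}
    {p : a ⟶ c} {u v : c ⟶ d} {q : d ⟶ b} {p' : a ⟶ c'} {u' v' : c' ⟶ d'} {q' : d' ⟶ b}
    (hrel : D.ORel u v) (hrel' : D.ORel u' v')
    (m : @Quiver.Path D.TotalObj D.quiverTotal d' d)
    (hm1 : p ≫ u = (p' ≫ u') ≫ m) (hm2 : q' = m ≫ q) :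
    ∃ t3, D.ChainLe2 (p ≫ v ≫ q) t3 ∧ D.ChainLe2 (p' ≫ v' ≫ q') t3 := by
  subst hm2
  rcases path_suffix' u p (p' ≫ u') m hm1 with ⟨n, hn1, hn2⟩ | ⟨n, hn1, hn2⟩
  · subst hn2; subst hn1
    refine ⟨p' ≫ v' ≫ n ≫ v ≫ q, Or.inr (Or.inl ?_), Or.inr (Or.inl ?_)⟩
    · simpa using OpData.Step.mk p' (n ≫ v ≫ q) hrel'
    · simpa using OpData.Step.mk (p' ≫ v' ≫ n) q hrel
  · have hu2 := orel_length hrel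
    have hu2' := orel_length hrel'
    have hlen : (Quiver.Path.length n) + m.length = 2 := by
      have := congrArg Quiver.Path.length hn2
      rw [Quiver.Path.length_comp n m] at this
      omega
    rcases (by omega : m.length = 0 ∨ m.length = 1 ∨ m.length = 2) with h0 | hl1 | hl2
    · -- same position
      have hdd := Quiver.Path.eq_of_length_zero m h0
      subst hdd
      have hmn := path_nil0' m h0
      subst hmn
      rw [Quiver.Path.comp_nil n] at hn2
      rw [← hn2] at hn1
      rcases path_suffix' u' p' p u hn1 with ⟨w, hw1, hw2⟩ | ⟨w, hw1, hw2⟩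
      · have hw0 : w.length = 0 := by
          have hl := congrArg Quiver.Path.length hw2
          rw [Quiver.Path.length_comp w u'] at hl
          omega
        have hcc := Quiver.Path.eq_of_length_zero w hw0
        subst hcc
        have hwn := path_nil0' w hw0
        subst hwn
        rw [Quiver.Path.nil_comp u'] at hw2
        rw [Quiver.Path.comp_nil p] at hw1
        rw [← hw2] at hrel'
        have hv : v = v' := orel_det hrel hrel'
        exact ⟨p ≫ v ≫ q, Or.inl rfl, Or.inl (by rw [hw1, hv]; simp)⟩
      · have hw0 : w.length = 0 := by
          have hl := congrArg Quiver.Path.length hw2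
          rw [Quiver.Path.length_comp w u] at hl
          omega
        have hcc := Quiver.Path.eq_of_length_zero w hw0
        subst hcc
        have hwn := path_nil0' w hw0
        subst hwn
        rw [Quiver.Path.nil_comp u] at hw2
        rw [Quiver.Path.comp_nil p'] at hw1
        rw [hw2] at hrel'
        have hv : v = v' := orel_det hrel hrel'
        exact ⟨p ≫ v ≫ q, Or.inl rfl, Or.inl (by rw [hw1, hv]; simp)⟩
    · -- overlapping redexes
      obtain ⟨e', rfl⟩ := path_len1' m hl1
      have hnl : n.length = 1 := by omega
      obtain ⟨e, rfl⟩ := path_len1' n hnl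
      subst hn2
      rcases path_suffix' u' p' p (Quiver.Hom.toPath e) hn1 with ⟨w, hw1, hw2⟩ | ⟨w, hw1, hw2⟩
      · exfalso
        have hl := congrArg Quiver.Path.length hw2
        rw [Quiver.Path.length_comp w u'] at hl
        have h1l : Quiver.Path.length (Quiver.Hom.toPath e) = 1 := rfl
        omega
      · have hwl : w.length = 1 := by
          have hl := congrArg Quiver.Path.length hw2
          rw [Quiver.Path.length_comp w (Quiver.Hom.toPath e)] at hl
          have h1l : Quiver.Path.length (Quiver.Hom.toPath e) = 1 := rfl
          omega
        obtain ⟨f, rfl⟩ := path_len1' w hwl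
        subst hw1; subst hw2
        obtain ⟨w₀, ch1, ch2⟩ := crit hid hcomp f e e' hrel' hrel
        refine ⟨p' ≫ w₀ ≫ q, ?_, ?_⟩
        · have := chain_congr p' q ch2
          simpa [Category.assoc] using this
        · have := chain_congr p' q ch1
          simpa [Category.assoc] using this
    · -- adjacent disjoint redexes
      have hn0 : n.length = 0 := by omega
      have hcd := Quiver.Path.eq_of_length_zero n hn0
      subst hcd
      have hnn := path_nil0' n hn0
      subst hnn
      rw [Quiver.Path.nil_comp m] at hn2
      rw [Quiver.Path.comp_nil p] at hn1
      rw [← hn2]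
      refine ⟨p' ≫ v' ≫ v ≫ q, Or.inr (Or.inl ?_), Or.inr (Or.inl ?_)⟩
      · rw [← hn1]
        simpa using OpData.Step.mk p' (v ≫ q) hrel'
      · simpa using OpData.Step.mk (p' ≫ v') q hrel

lemma step_cases {a b : Paths D.TotalObj} {w t2 : a ⟶ b} (h : D.Step w t2) :
    ∃ (c d : Paths D.TotalObj) (p : a ⟶ c) (u v : c ⟶ d) (q : d ⟶ b),
      D.ORel u v ∧ w = p ≫ u ≫ q ∧ t2 = p ≫ v ≫ q := by
  cases h with
  | mk p q h => exact ⟨_, _, p, _, _, q, h, rfl, rfl⟩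

end OpData

/-- Under the hypotheses that each `O_k` has subsingleton hom-sets and
that restriction of morphisms along face maps is functorial (uniqueness of restriction),
the rewriting system on words of generators of `O` is locally confluent:  if a word `t`
rewrites in one step both to `t'` and to `t''`, then there is a word `t'''` reachable from
`t'` and from `t''` by chains of rewrites of length at most `2`. -/
theorem rewriting_locally_confluent (D : OpData)
    (hsub : ∀ (k : ℕ) (a b : D.Obj k), Subsingleton (a ⟶ b))
    (hid : ∀ {k : ℕ} {x : D.Obj k} {α : D.Obj (k + 1)} (γ : D.G k x α),
      D.restr γ (𝟙 α) = ⟨x, 𝟙 x, γ⟩)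
    (hcomp : ∀ {k : ℕ} {x : D.Obj k} {α β δ : D.Obj (k + 1)}
      (γ : D.G k x α) (g : α ⟶ β) (g' : β ⟶ δ),
      D.restr γ (g ≫ g') =
        ⟨(D.restr (D.restr γ g).2.2 g').1,
         (D.restr γ g).2.1 ≫ (D.restr (D.restr γ g).2.2 g').2.1,
         (D.restr (D.restr γ g).2.2 g').2.2⟩)
    {a b : Paths D.TotalObj} {t t' t'' : a ⟶ b}
    (h1 : D.Step t t') (h2 : D.Step t t'') :
    ∃ t''', D.ChainLe2 t' t''' ∧ D.ChainLe2 t'' t''' := by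
  cases h1 with
  | mk p q hrel =>
    rename_i u v
    obtain ⟨c', d', p', u', v', q', hrel', heq, rfl⟩ := OpData.step_cases h2
    have heq' : (p ≫ u) ≫ q = (p' ≫ u') ≫ q' := by simpa [Category.assoc] using heq
    rcases path_suffix' q (p ≫ u) (p' ≫ u') q' heq' with ⟨m, hm1, hm2⟩ | ⟨m, hm1, hm2⟩
    · exact OpData.auxConf hid hcomp hrel hrel' m hm1 hm2
    · obtain ⟨t3, hA, hB⟩ := OpData.auxConf hid hcomp hrel' hrel m hm1 hm2
      exact ⟨t3, hB, hA⟩
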